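/- arXiv:2106.10697 — 3 statements merged into one kernel-verified Lean document; each statement's English description precedes it below -/
import Mathlib

section
/- Let Ω = Ω₁ × ⋯ × Ω_N ⊆ ℝ^{Nn} be nonempty, compact and convex, let F : ℝ^{Nn} → ℝ^{Nn} be continuous and strongly monotone on Ω with constant w > 0, let C = {y : Ay = d} with A ∈ ℝ^{l×Nn}, d ∈ ℝ^l, and suppose there exists ŷ in the topological interior of Ω with Aŷ = d. Then there exist a unique y* ∈ Ω ∩ C and a Lagrange multiplier μ* ∈ ℝ^l such that y* = P_Ω(y* − F(y*) − Aᵀμ*) and Ay* = d; moreover this y* is the unique solution of VI(Ω∩C, F). -/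
open Finset

theorem simplex_feas {ι : Type*} [Fintype ι] [DecidableEq ι] [Nonempty ι] (M : ι → ι → ℝ)
    (h : ∀ lam ∈ stdSimplex ℝ ι, ∑ j, ∑ i, lam j * lam i * M j i ≤ 0) :
    ∃ mu ∈ stdSimplex ℝ ι, ∀ j, ∑ i, mu i * M j i ≤ 0 := by
  by_contra hc
  push_neg at hc
  set Φ : (ι → ℝ) → (ι → ℝ) := fun mu j => ∑ i, mu i * M j i with hΦ
  have hΦlin : IsLinearMap ℝ Φ := by
    constructor
    · intro a b; funext j; simp [hΦ, add_mul, Finset.sum_add_distrib]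
    · intro c a; funext j; simp [hΦ, Finset.mul_sum, mul_assoc]
  set S : Set (ι → ℝ) := Φ '' stdSimplex ℝ ι with hS
  set T : Set (ι → ℝ) := {z | ∀ j, z j ≤ 0} with hT
  have hdisj : Disjoint S T := by
    rw [Set.disjoint_left]
    rintro a ⟨mu, hmu, rfl⟩ haT
    obtain ⟨j, hj⟩ := hc mu hmu
    exact absurd (haT j) (not_le.mpr hj)
  have hScvx : Convex ℝ S := (convex_stdSimplex ℝ ι).is_linear_image hΦlin
  have hScpt : IsCompact S :=
    (isCompact_stdSimplex ℝ ι).image (IsLinearMap.mk' Φ hΦlin).continuous_of_finiteDimensional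
  have hTcl : IsClosed T := by
    have : T = ⋂ j, {z : ι → ℝ | z j ≤ 0} := by ext z; simp [hT]
    rw [this]
    exact isClosed_iInter fun j => isClosed_le (continuous_apply j) continuous_const
  have hTcvx : Convex ℝ T := by
    intro x hx y hy a b ha hb _ j
    exact add_nonpos (mul_nonpos_of_nonneg_of_nonpos ha (hx j))
      (mul_nonpos_of_nonneg_of_nonpos hb (hy j))
  obtain ⟨f, u, v, hfS, huv, hfT⟩ := geometric_hahn_banach_compact_closed hScvx hScpt hTcvx hTcl hdisj
  have h0T : (0 : ι → ℝ) ∈ T := fun j => le_refl 0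
  have hv0 : v < 0 := by simpa using hfT 0 h0T
  set p : ι → ℝ := fun j => -(f (Pi.single j (1:ℝ))) with hp
  have hpnn : ∀ j, 0 ≤ p j := by
    intro j
    by_contra hneg
    push_neg at hneg
    have hfe : 0 < f ((Pi.single j (1:ℝ))) := by
      have : f ((Pi.single j (1:ℝ))) = -(p j) := by simp [hp]
      rw [this]; linarith
    set t : ℝ := (|v| + 1) / f ((Pi.single j (1:ℝ))) with ht
    have htpos : 0 < t := div_pos (by positivity) hfe
    have hmem : (-t) • (Pi.single j (1:ℝ) : ι → ℝ) ∈ T := by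
      intro j'
      by_cases hjj : j' = j
      · subst hjj; simp [Pi.single_apply, htpos.le]
      · simp [Pi.single_apply, hjj]
    have hlt := hfT _ hmem
    rw [map_smul, smul_eq_mul] at hlt
    have hval : (-t) * f ((Pi.single j (1:ℝ))) = -(|v| + 1) := by
      rw [ht, neg_mul, div_mul_cancel₀ _ hfe.ne']
    rw [hval] at hlt
    nlinarith [abs_nonneg v, neg_abs_le v]
  have hfa : ∀ a : ι → ℝ, f a = -∑ j, a j * p j := by
    intro a
    have ha : a = ∑ j, (a j) • (Pi.single j (1:ℝ) : ι → ℝ) := by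
      conv_lhs => rw [← Finset.univ_sum_single a]
      refine Finset.sum_congr rfl fun j _ => ?_
      ext j'
      by_cases hjj : j' = j <;> simp [Pi.single_apply, hjj]
    calc f a = f (∑ j, (a j) • (Pi.single j (1:ℝ) : ι → ℝ)) := by rw [← ha]
    _ = ∑ j, (a j) * f ((Pi.single j (1:ℝ))) := by rw [map_sum]; simp
    _ = -∑ j, a j * p j := by simp [hp, ← Finset.sum_neg_distrib]
  -- sum of p positive
  have hfaneg : ∀ a ∈ S, f a < 0 := fun a haS => lt_trans (lt_trans (hfS a haS) huv) hv0
  have hSne : S.Nonempty := by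
    refine ⟨Φ (Pi.single (Classical.arbitrary ι) (1:ℝ)), ⟨_, ?_, rfl⟩⟩
    constructor
    · intro j; by_cases hjj : j = Classical.arbitrary ι <;> simp [Pi.single_apply, hjj]
    · simp
  have hs : 0 < ∑ j, p j := by
    rcases (Finset.sum_nonneg (fun j _ => hpnn j)).lt_or_eq with hlt | heq
    · exact hlt
    · exfalso
      have hall : ∀ j, p j = 0 := by
        intro j
        have := (Finset.sum_eq_zero_iff_of_nonneg (fun j _ => hpnn j)).mp heq.symm
        exact this j (Finset.mem_univ j)
      obtain ⟨a, haS⟩ := hSne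
      have := hfaneg a haS
      rw [hfa a] at this
      simp [hall] at this
  set s : ℝ := ∑ j, p j with hsdef
  set lam : ι → ℝ := fun j => p j / s with hlam
  have hlamS : lam ∈ stdSimplex ℝ ι := by
    constructor
    · intro j; exact div_nonneg (hpnn j) hs.le
    · rw [hlam]; simp only [← Finset.sum_div]; field_simp; exact hsdef.symm
  have haS : Φ lam ∈ S := ⟨lam, hlamS, rfl⟩
  have hneg := hfaneg _ haS
  rw [hfa] at hneg
  -- so ∑ j, Φ lam j * p j > 0 ; rewrite p j = s * lam j
  have hX : 0 < ∑ j, Φ lam j * p j := by linarith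
  have hpj : ∀ j, p j = s * lam j := by
    intro j; rw [hlam]; field_simp
  have hXlam : ∑ j, Φ lam j * p j = s * ∑ j, ∑ i, lam j * lam i * M j i := by
    rw [Finset.mul_sum]
    refine Finset.sum_congr rfl fun j _ => ?_
    rw [hpj j, hΦ]
    simp only [Finset.mul_sum, Finset.sum_mul]
    refine Finset.sum_congr rfl fun i _ => ?_
    ring
  rw [hXlam] at hX
  have := h lam hlamS
  nlinarith
open scoped RealInnerProductSpace

theorem exists_vi_sol (N n : ℕ) (K : Set (Fin N → EuclideanSpace ℝ (Fin n)))
    (hKne : K.Nonempty) (hKcpt : IsCompact K) (hKcvx : Convex ℝ K)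
    (F : (Fin N → EuclideanSpace ℝ (Fin n)) → (Fin N → EuclideanSpace ℝ (Fin n)))
    (hFcont : ContinuousOn F K)
    (hmono : ∀ x ∈ K, ∀ y ∈ K, 0 ≤ ∑ i, ⟪F x i - F y i, x i - y i⟫) :
    ∃ x ∈ K, ∀ z ∈ K, 0 ≤ ∑ i, ⟪F x i, z i - x i⟫ := by
  classical
  -- Minty sets
  set t : K → Set (Fin N → EuclideanSpace ℝ (Fin n)) := fun y => {x : Fin N → EuclideanSpace ℝ (Fin n) | ∑ i, ⟪F y.1 i, x i⟫ ≤ ∑ i, ⟪F y.1 i, y.1 i⟫} with ht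
  have htcl : ∀ y : K, IsClosed (t y) := by
    intro y
    refine isClosed_le ?_ continuous_const
    exact continuous_finset_sum _ fun i _ =>
      (continuous_const.inner ((continuous_apply i)))
  -- finite intersection property
  have hfip : ∀ u : Finset K, (K ∩ ⋂ y ∈ u, t y).Nonempty := by
    intro u
    rcases u.eq_empty_or_nonempty with rfl | hune
    · obtain ⟨x0, hx0⟩ := hKne
      exact ⟨x0, hx0, by simp⟩
    · have : Nonempty {y // y ∈ u} := ⟨⟨hune.choose, hune.choose_spec⟩⟩
      set ι := {y // y ∈ u}
      set pt : ι → (Fin N → EuclideanSpace ℝ (Fin n)) := fun j => (j.1 : Fin N → EuclideanSpace ℝ (Fin n)) with hpt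
      have hptK : ∀ j : ι, pt j ∈ K := fun j => j.1.2
      set M : ι → ι → ℝ := fun j i => ∑ i', ⟪F (pt j) i', pt i i' - pt j i'⟫ with hM
      have hquad : ∀ lam ∈ stdSimplex ℝ ι, ∑ j, ∑ i, lam j * lam i * M j i ≤ 0 := by
        intro lam hlam
        have hswap : ∑ j, ∑ i, lam j * lam i * M j i = ∑ j, ∑ i, lam j * lam i * M i j := by
          rw [Finset.sum_comm]
          exact Finset.sum_congr rfl fun j _ => Finset.sum_congr rfl fun i _ => by ring
        have h2 : (2:ℝ) * (∑ j, ∑ i, lam j * lam i * M j i)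
            = ∑ j, ∑ i, lam j * lam i * (M j i + M i j) := by
          rw [two_mul]
          nth_rewrite 2 [hswap]
          rw [← Finset.sum_add_distrib]
          refine Finset.sum_congr rfl fun j _ => ?_
          rw [← Finset.sum_add_distrib]
          exact Finset.sum_congr rfl fun i _ => by ring
        have hterm : ∀ j i : ι, M j i + M i j ≤ 0 := by
          intro j i
          have hm := hmono (pt j) (hptK j) (pt i) (hptK i)
          have : M j i + M i j = -∑ i', ⟪F (pt j) i' - F (pt i) i', pt j i' - pt i i'⟫ := by
            rw [hM, ← Finset.sum_add_distrib, ← Finset.sum_neg_distrib]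
            refine Finset.sum_congr rfl fun i' _ => ?_
            simp only [inner_sub_left, inner_sub_right]
            ring
          rw [this]
          linarith
        have : ∑ j, ∑ i, lam j * lam i * (M j i + M i j) ≤ 0 := by
          refine Finset.sum_nonpos fun j _ => Finset.sum_nonpos fun i _ => ?_
          exact mul_nonpos_of_nonneg_of_nonpos (mul_nonneg (hlam.1 j) (hlam.1 i)) (hterm j i)
        linarith
      obtain ⟨mu, hmu, hmuM⟩ := simplex_feas M hquad
      set x : Fin N → EuclideanSpace ℝ (Fin n) := ∑ i, mu i • pt i with hx
      have hxK : x ∈ K := hKcvx.sum_mem (fun i _ => hmu.1 i) hmu.2 (fun i _ => hptK i)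
      refine ⟨x, hxK, ?_⟩
      simp only [Set.mem_iInter]
      intro y hyu
      set j : ι := ⟨y, hyu⟩
      have hexp : ∑ i', ⟪F (pt j) i', x i' - pt j i'⟫ = ∑ i, mu i * M j i := by
        have hxi : ∀ i', x i' - pt j i' = ∑ i, mu i • (pt i i' - pt j i') := by
          intro i'
          have : (∑ i, mu i • pt i) i' = ∑ i, mu i • pt i i' := by
            simp [Finset.sum_apply]
          rw [hx]
          simp only [this, smul_sub, Finset.sum_sub_distrib]
          congr 1
          rw [← Finset.sum_smul, hmu.2, one_smul]
        calc ∑ i', ⟪F (pt j) i', x i' - pt j i'⟫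
            = ∑ i', ∑ i, mu i * ⟪F (pt j) i', pt i i' - pt j i'⟫ := by
              refine Finset.sum_congr rfl fun i' _ => ?_
              rw [hxi i', inner_sum]
              exact Finset.sum_congr rfl fun i _ => real_inner_smul_right _ _ _
          _ = ∑ i, mu i * M j i := by
              rw [Finset.sum_comm]
              exact Finset.sum_congr rfl fun i _ => by rw [hM, Finset.mul_sum]
      have hle : ∑ i', ⟪F (pt j) i', x i' - pt j i'⟫ ≤ 0 := by
        rw [hexp]; exact hmuM j
      have : ∑ i', ⟪F (pt j) i', x i'⟫ ≤ ∑ i', ⟪F (pt j) i', pt j i'⟫ := by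
        have hsplit : ∑ i', ⟪F (pt j) i', x i' - pt j i'⟫
            = ∑ i', ⟪F (pt j) i', x i'⟫ - ∑ i', ⟪F (pt j) i', pt j i'⟫ := by
          rw [← Finset.sum_sub_distrib]
          exact Finset.sum_congr rfl fun i' _ => by rw [inner_sub_right]
        linarith [hsplit ▸ hle]
      exact this
  -- compactness: full intersection nonempty
  have hmain : (K ∩ ⋂ y : K, t y).Nonempty := by
    by_contra hem
    rw [Set.not_nonempty_iff_eq_empty] at hem
    obtain ⟨u, hu⟩ := hKcpt.elim_finite_subfamily_closed t htcl hem
    obtain ⟨x, hx⟩ := hfip u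
    rw [hu] at hx
    exact hx
  obtain ⟨xbar, hxbarK, hxbart⟩ := hmain
  rw [Set.mem_iInter] at hxbart
  -- Minty: ∀ y ∈ K, 0 ≤ ∑ ⟪F y i, y i - xbar i⟫
  have hminty : ∀ y ∈ K, 0 ≤ ∑ i, ⟪F y i, y i - xbar i⟫ := by
    intro y hy
    have := hxbart ⟨y, hy⟩
    rw [ht] at this
    simp only [Set.mem_setOf_eq] at this
    have hsplit : ∑ i, ⟪F y i, y i - xbar i⟫
        = ∑ i, ⟪F y i, y i⟫ - ∑ i, ⟪F y i, xbar i⟫ := by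
      rw [← Finset.sum_sub_distrib]
      exact Finset.sum_congr rfl fun i' _ => by rw [inner_sub_right]
    rw [hsplit]
    linarith
  -- Minty → Stampacchia
  refine ⟨xbar, hxbarK, ?_⟩
  intro z hz
  set v : Fin N → EuclideanSpace ℝ (Fin n) := z - xbar with hv
  set ts : ℕ → ℝ := fun m => 1 / (m + 1 : ℝ) with hts
  have hts01 : ∀ m, 0 < ts m ∧ ts m ≤ 1 := by
    intro m
    constructor
    · positivity
    · rw [hts]
      rw [div_le_one (by positivity)]
      linarith [Nat.cast_nonneg (α := ℝ) m]
  set ym : ℕ → (Fin N → EuclideanSpace ℝ (Fin n)) := fun m => xbar + ts m • v with hym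
  have hymK : ∀ m, ym m ∈ K := by
    intro m
    have heq : ym m = (1 - ts m) • xbar + ts m • z := by
      rw [hym, hv]
      simp only [smul_sub, sub_smul, one_smul]
      abel
    rw [heq]
    have ha : (0:ℝ) ≤ 1 - ts m := by linarith [(hts01 m).2]
    have hb : (0:ℝ) ≤ ts m := (hts01 m).1.le
    exact hKcvx hxbarK hz ha hb (by ring)
  have hstep : ∀ m, 0 ≤ ∑ i, ⟪F (ym m) i, z i - xbar i⟫ := by
    intro m
    have h1 := hminty (ym m) (hymK m)
    have h2 : ∀ i, (ym m) i - xbar i = ts m • (z i - xbar i) := by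
      intro i
      rw [hym]
      simp only [hv, smul_sub, Pi.add_apply, Pi.smul_apply, Pi.sub_apply]
      abel
    have h3 : ∑ i, ⟪F (ym m) i, ym m i - xbar i⟫ = ts m * ∑ i, ⟪F (ym m) i, z i - xbar i⟫ := by
      rw [Finset.mul_sum]
      refine Finset.sum_congr rfl fun i _ => ?_
      rw [h2 i, real_inner_smul_right]
    rw [h3] at h1
    exact nonneg_of_mul_nonneg_right h1 (hts01 m).1
  -- limit
  have hymtend : Filter.Tendsto ym Filter.atTop (nhds xbar) := by
    have h0 : Filter.Tendsto ts Filter.atTop (nhds 0) := tendsto_one_div_add_atTop_nhds_zero_nat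
    have : Filter.Tendsto (fun m => ts m • v) Filter.atTop (nhds ((0:ℝ) • v)) :=
      h0.smul_const v
    rw [zero_smul] at this
    have := Filter.Tendsto.const_add xbar this
    rw [add_zero] at this
    exact this
  have hymtendK : Filter.Tendsto ym Filter.atTop (nhdsWithin xbar K) := by
    rw [tendsto_nhdsWithin_iff]
    exact ⟨hymtend, Filter.Eventually.of_forall hymK⟩
  have hFtend : Filter.Tendsto (fun m => F (ym m)) Filter.atTop (nhds (F xbar)) :=
    (hFcont xbar hxbarK).tendsto.comp hymtendK
  have hipcont : Continuous (fun a : Fin N → EuclideanSpace ℝ (Fin n) =>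
      ∑ i, ⟪a i, z i - xbar i⟫) :=
    continuous_finset_sum _ fun i _ => (continuous_apply i).inner continuous_const
  have hlim : Filter.Tendsto (fun m => ∑ i, ⟪F (ym m) i, z i - xbar i⟫) Filter.atTop
      (nhds (∑ i, ⟪F xbar i, z i - xbar i⟫)) :=
    (hipcont.tendsto (F xbar)).comp hFtend
  exact ge_of_tendsto' hlim hstep
open scoped RealInnerProductSpace

theorem adjoint_bound (N n l : ℕ)
    (A : Fin N → (EuclideanSpace ℝ (Fin n)) →ₗ[ℝ] EuclideanSpace ℝ (Fin l)) :
    ∃ c > 0, ∀ v : EuclideanSpace ℝ (Fin l),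
      (∀ u : EuclideanSpace ℝ (Fin l), (∀ i, LinearMap.adjoint (A i) u = 0) → ⟪u, v⟫ = 0) →
      c * ‖v‖ ≤ ∑ i, ‖LinearMap.adjoint (A i) v‖ := by
  classical
  set Uker : Submodule ℝ (EuclideanSpace ℝ (Fin l)) :=
    ⨅ i, LinearMap.ker (LinearMap.adjoint (A i)) with hUker
  set U : Submodule ℝ (EuclideanSpace ℝ (Fin l)) := Ukerᗮ with hU
  have hmemUker : ∀ u, u ∈ Uker ↔ ∀ i, LinearMap.adjoint (A i) u = 0 := by
    intro u
    simp [hUker, Submodule.mem_iInf, LinearMap.mem_ker]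
  have hmemU : ∀ v, (∀ u : EuclideanSpace ℝ (Fin l),
      (∀ i, LinearMap.adjoint (A i) u = 0) → ⟪u, v⟫ = 0) → v ∈ U := by
    intro v hv
    rw [hU, Submodule.mem_orthogonal]
    intro u hu
    exact hv u ((hmemUker u).mp hu)
  set q : EuclideanSpace ℝ (Fin l) → ℝ := fun v => ∑ i, ‖LinearMap.adjoint (A i) v‖ with hq
  have hqcont : Continuous q :=
    continuous_finset_sum _ fun i _ =>
      ((LinearMap.adjoint (A i)).continuous_of_finiteDimensional).norm
  have hqnn : ∀ v, 0 ≤ q v := fun v => Finset.sum_nonneg fun i _ => norm_nonneg _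
  have hqhom : ∀ (a : ℝ) (v), 0 ≤ a → q (a • v) = a * q v := by
    intro a v ha
    rw [hq]
    simp only [map_smul, norm_smul, Real.norm_eq_abs, abs_of_nonneg ha, Finset.mul_sum]
  set Sset : Set (EuclideanSpace ℝ (Fin l)) := Metric.sphere 0 1 ∩ (U : Set _) with hSset
  have hScpt : IsCompact Sset :=
    (isCompact_sphere 0 1).inter_right U.closed_of_finiteDimensional
  rcases Sset.eq_empty_or_nonempty with hem | hne
  · refine ⟨1, one_pos, fun v hv => ?_⟩
    have hvU := hmemU v hv
    have hv0 : v = 0 := by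
      by_contra hv0
      have : ‖v‖⁻¹ • v ∈ Sset := by
        constructor
        · rw [mem_sphere_zero_iff_norm, norm_smul, Real.norm_eq_abs,
            abs_of_nonneg (by positivity)]
          exact inv_mul_cancel₀ (norm_ne_zero_iff.mpr hv0)
        · exact U.smul_mem _ hvU
      rw [hem] at this
      exact this
    rw [hv0]
    simpa using hqnn 0
  · obtain ⟨v0, hv0S, hv0min⟩ := hScpt.exists_isMinOn hne hqcont.continuousOn
    have hv0U : v0 ∈ U := hv0S.2
    have hv0n : ‖v0‖ = 1 := mem_sphere_zero_iff_norm.mp hv0S.1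
    have hc : 0 < q v0 := by
      rcases (hqnn v0).lt_or_eq with h | h
      · exact h
      · exfalso
        have hker : v0 ∈ Uker := by
          rw [hmemUker]
          intro i
          have := (Finset.sum_eq_zero_iff_of_nonneg (fun i _ => norm_nonneg _)).mp h.symm
          exact norm_eq_zero.mp (this i (Finset.mem_univ i))
        have : v0 = 0 := by
          have h1 : ⟪v0, v0⟫ = (0:ℝ) := (Submodule.mem_orthogonal Uker v0).mp hv0U v0 hker
          exact inner_self_eq_zero.mp h1
        rw [this] at hv0n
        simp at hv0n
    refine ⟨q v0, hc, fun v hv => ?_⟩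
    have hvU := hmemU v hv
    by_cases hv0' : v = 0
    · rw [hv0']
      simpa using hqnn 0
    · have hnv : 0 < ‖v‖ := norm_pos_iff.mpr hv0'
      have hmem : ‖v‖⁻¹ • v ∈ Sset := by
        constructor
        · rw [mem_sphere_zero_iff_norm, norm_smul, Real.norm_eq_abs,
            abs_of_nonneg (by positivity)]
          exact inv_mul_cancel₀ (norm_ne_zero_iff.mpr hv0')
        · exact U.smul_mem _ hvU
      have hmin2 : q v0 ≤ q (‖v‖⁻¹ • v) := hv0min hmem
      have hqv : q (‖v‖⁻¹ • v) = ‖v‖⁻¹ * q v := hqhom _ _ (by positivity)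
      rw [hqv] at hmin2
      calc q v0 * ‖v‖ ≤ (‖v‖⁻¹ * q v) * ‖v‖ := by nlinarith
      _ = q v := by field_simp
open scoped RealInnerProductSpace
set_option maxHeartbeats 2000000

/-- Under compactness, convexity, continuity and strong monotonicity, and a Slater-type interior
point of `Ω` satisfying the coupled equality constraint, there exist a unique `y* ∈ Ω ∩ C` and a
Lagrange multiplier `μ*` with `y* = P_Ω(y* − F(y*) − Aᵀμ*)` and `Ay* = d`; moreover `y*` is the
unique solution of `VI(Ω ∩ C, F)`. -/
theorem existence_uniqueness_gne_kkt (N n l : ℕ)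
    (Ω : Fin N → Set (EuclideanSpace ℝ (Fin n)))
    (hSne : (Set.univ.pi Ω).Nonempty)
    (hScpt : IsCompact (Set.univ.pi Ω))
    (hScvx : Convex ℝ (Set.univ.pi Ω))
    (P : Fin N → EuclideanSpace ℝ (Fin n) → EuclideanSpace ℝ (Fin n))
    (hPmem : ∀ i x, P i x ∈ Ω i)
    (hPproj : ∀ i x, ∀ u ∈ Ω i, ⟪x - P i x, u - P i x⟫ ≤ 0)
    (F : (Fin N → EuclideanSpace ℝ (Fin n)) → (Fin N → EuclideanSpace ℝ (Fin n)))
    (hFcont : ContinuousOn F (Set.univ.pi Ω))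
    (w : ℝ) (hw : 0 < w)
    (hmono : ∀ x ∈ Set.univ.pi Ω, ∀ y ∈ Set.univ.pi Ω,
      w * ∑ i, ‖x i - y i‖ ^ 2 ≤ ∑ i, ⟪F x i - F y i, x i - y i⟫)
    (A : Fin N → EuclideanSpace ℝ (Fin n) →ₗ[ℝ] EuclideanSpace ℝ (Fin l))
    (d : EuclideanSpace ℝ (Fin l))
    (yhat : Fin N → EuclideanSpace ℝ (Fin n))
    (hyhat : yhat ∈ interior (Set.univ.pi Ω))
    (hyhatC : ∑ i, A i (yhat i) = d) :
    ∃ ystar : Fin N → EuclideanSpace ℝ (Fin n), ∃ μstar : EuclideanSpace ℝ (Fin l),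
      (∀ i, ystar i ∈ Ω i) ∧ (∑ i, A i (ystar i) = d) ∧
      (∀ i, ystar i = P i (ystar i - F ystar i - LinearMap.adjoint (A i) μstar)) ∧
      (∀ (y' : Fin N → EuclideanSpace ℝ (Fin n)) (μ' : EuclideanSpace ℝ (Fin l)),
        (∀ i, y' i ∈ Ω i) → (∑ i, A i (y' i) = d) →
        (∀ i, y' i = P i (y' i - F y' i - LinearMap.adjoint (A i) μ')) → y' = ystar) ∧
      ((∀ y : Fin N → EuclideanSpace ℝ (Fin n), (∀ i, y i ∈ Ω i) →
        (∑ i, A i (y i) = d) → 0 ≤ ∑ i, ⟪F ystar i, y i - ystar i⟫) ∧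
       (∀ y' : Fin N → EuclideanSpace ℝ (Fin n), (∀ i, y' i ∈ Ω i) →
        (∑ i, A i (y' i) = d) →
        (∀ y : Fin N → EuclideanSpace ℝ (Fin n), (∀ i, y i ∈ Ω i) →
          (∑ i, A i (y i) = d) → 0 ≤ ∑ i, ⟪F y' i, y i - y' i⟫) → y' = ystar)) := by
  classical
  set piΩ := Set.univ.pi Ω with hpiΩ
  set L : (Fin N → EuclideanSpace ℝ (Fin n)) → EuclideanSpace ℝ (Fin l) :=
    fun y => ∑ i, A i (y i) with hL
  have hmemPi : ∀ y : Fin N → EuclideanSpace ℝ (Fin n), y ∈ piΩ ↔ ∀ i, y i ∈ Ω i := by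
    intro y; rw [hpiΩ]; exact Set.mem_univ_pi
  have hLcont : Continuous L :=
    continuous_finset_sum _ fun i _ =>
      ((A i).continuous_of_finiteDimensional).comp (continuous_apply i)
  have hLadd : ∀ x y, L (x + y) = L x + L y := by
    intro x y
    simp [hL, Finset.sum_add_distrib]
  have hLsub : ∀ x y, L (x - y) = L x - L y := by
    intro x y
    simp [hL, Finset.sum_sub_distrib]
  have hLsmul : ∀ (t : ℝ) x, L (t • x) = t • L x := by
    intro t x
    simp [hL, Finset.smul_sum]
  set K : Set (Fin N → EuclideanSpace ℝ (Fin n)) := {y | y ∈ piΩ ∧ L y = d} with hK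
  have hyhatPi : yhat ∈ piΩ := interior_subset hyhat
  have hKne : K.Nonempty := ⟨yhat, hyhatPi, hyhatC⟩
  have hKsub : K ⊆ piΩ := fun y hy => hy.1
  have hKcpt : IsCompact K := by
    have : K = piΩ ∩ {y | L y = d} := rfl
    rw [this]
    exact hScpt.inter_right (isClosed_eq hLcont continuous_const)
  have hKcvx : Convex ℝ K := by
    intro x hx y hy a b ha hb hab
    refine ⟨hScvx hx.1 hy.1 ha hb hab, ?_⟩
    rw [hLadd, hLsmul, hLsmul, hx.2, hy.2, ← add_smul, hab, one_smul]
  -- VI solution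
  obtain ⟨ystar, hystarK, hVI⟩ := exists_vi_sol N n K hKne hKcpt hKcvx F
    (hFcont.mono hKsub)
    (fun x hx y hy => le_trans
      (mul_nonneg hw.le (Finset.sum_nonneg fun i _ => sq_nonneg _))
      (hmono x (hKsub hx) y (hKsub hy)))
  -- VI uniqueness
  have huniq : ∀ y' ∈ K, (∀ z ∈ K, 0 ≤ ∑ i, ⟪F y' i, z i - y' i⟫) → y' = ystar := by
    intro y' hy' hVI'
    have h1 := hVI y' hy'
    have h2 := hVI' ystar hystarK
    have h3 := hmono y' (hKsub hy') ystar (hKsub hystarK)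
    have h4 : ∑ i, ⟪F y' i - F ystar i, y' i - ystar i⟫
        = (∑ i, ⟪F y' i, y' i - ystar i⟫) - ∑ i, ⟪F ystar i, y' i - ystar i⟫ := by
      rw [← Finset.sum_sub_distrib]
      exact Finset.sum_congr rfl fun i _ => by rw [inner_sub_left]
    have h5 : ∑ i, ⟪F y' i, y' i - ystar i⟫ = -∑ i, ⟪F y' i, ystar i - y' i⟫ := by
      rw [← Finset.sum_neg_distrib]
      refine Finset.sum_congr rfl fun i _ => ?_
      rw [← inner_neg_right, neg_sub]
    have h6 : ∑ i, ‖y' i - ystar i‖ ^ 2 ≤ 0 := by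
      by_contra hcon
      push_neg at hcon
      nlinarith
    have h7 : ∀ i, ‖y' i - ystar i‖ ^ 2 = 0 := by
      intro i
      have := Finset.sum_nonneg (fun i (_ : i ∈ Finset.univ) => sq_nonneg ‖y' i - ystar i‖)
      have heq : ∑ i, ‖y' i - ystar i‖ ^ 2 = 0 := le_antisymm h6 this
      exact (Finset.sum_eq_zero_iff_of_nonneg (fun i _ => sq_nonneg _)).mp heq i
        (Finset.mem_univ i)
    funext i
    have := h7 i
    rw [pow_eq_zero_iff (by norm_num), norm_eq_zero, sub_eq_zero] at this
    exact this
  -- projection characterization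
  have hprojchar : ∀ (i : Fin N) (zpt x : EuclideanSpace ℝ (Fin n)), zpt ∈ Ω i →
      (∀ u ∈ Ω i, ⟪x - zpt, u - zpt⟫ ≤ 0) → zpt = P i x := by
    intro i zpt x hz hvar
    have h1 := hPproj i x zpt hz
    have h2 := hvar (P i x) (hPmem i x)
    have key : ⟪zpt - P i x, zpt - P i x⟫
        = ⟪x - P i x, zpt - P i x⟫ + ⟪x - zpt, P i x - zpt⟫ := by
      simp only [inner_sub_left, inner_sub_right]
      ring
    have h3 : ⟪zpt - P i x, zpt - P i x⟫ ≤ 0 := by rw [key]; linarith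
    have h4 : zpt - P i x = 0 := inner_self_eq_zero.mp (le_antisymm h3 real_inner_self_nonneg)
    rw [sub_eq_zero] at h4
    exact h4
  -- multiplier existence
  have hmult : ∃ μbar : EuclideanSpace ℝ (Fin l), ∀ i, ∀ ui ∈ Ω i,
      0 ≤ ⟪F ystar i + LinearMap.adjoint (A i) μbar, ui - ystar i⟫ := by
    set g : Fin N → EuclideanSpace ℝ (Fin n) := F ystar with hg
    -- Slater radius
    obtain ⟨ε, hε, hballε⟩ : ∃ ε > 0, Metric.ball yhat ε ⊆ piΩ :=
      Metric.mem_nhds_iff.mp (mem_interior_iff_mem_nhds.mp hyhat)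
    set ρ : ℝ := ε / 2 with hρdef
    have hρ : 0 < ρ := by positivity
    have hballρ : ∀ z : Fin N → EuclideanSpace ℝ (Fin n),
        (∀ i, ‖z i - yhat i‖ ≤ ρ) → z ∈ piΩ := by
      intro z hz
      apply hballε
      rw [Metric.mem_ball, dist_pi_lt_iff hε]
      intro i
      rw [dist_eq_norm]
      have := hz i
      rw [hρdef] at this
      linarith
    -- uniform bound on the compact set
    obtain ⟨r0, hr0⟩ := hScpt.isBounded.subset_closedBall 0
    set R : ℝ := max r0 0 with hRdef
    have hR0 : 0 ≤ R := le_max_right _ _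
    have hR : ∀ y ∈ piΩ, ∀ i, ‖y i‖ ≤ R := by
      intro y hy i
      have h1 : dist y 0 ≤ r0 := by
        have := hr0 hy
        rwa [Metric.mem_closedBall] at this
      have h2 : dist (y i) ((0 : Fin N → EuclideanSpace ℝ (Fin n)) i) ≤ dist y 0 :=
        dist_le_pi_dist y 0 i
      have h3 : ‖y i‖ = dist (y i) ((0 : Fin N → EuclideanSpace ℝ (Fin n)) i) := by
        simp [dist_eq_norm]
      rw [h3]
      exact le_trans (le_trans h2 h1) (le_max_left _ _)
    set G : ℝ := ∑ i, ‖g i‖ with hGdef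
    have hG0 : 0 ≤ G := Finset.sum_nonneg fun i _ => norm_nonneg _
    set C0 : ℝ := 2 * R * G with hC0def
    have hC00 : 0 ≤ C0 := by positivity
    set C1 : ℝ := G * (2 * R + ρ) with hC1def
    -- penalty functions and their minimizers
    set f : ℕ → (Fin N → EuclideanSpace ℝ (Fin n)) → ℝ :=
      fun k y => (∑ i, ⟪g i, y i⟫) + (((k : ℝ) + 1) / 2) * ‖L y - d‖ ^ 2 with hfdef
    have hfcont : ∀ k, Continuous (f k) := by
      intro k
      refine Continuous.add ?_ (continuous_const.mul ((hLcont.sub continuous_const).norm.pow 2))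
      exact continuous_finset_sum _ fun i _ => continuous_const.inner (continuous_apply i)
    have hminex : ∀ k, ∃ y ∈ piΩ, IsMinOn (f k) piΩ y :=
      fun k => hScpt.exists_isMinOn hSne (hfcont k).continuousOn
    choose yk hykPi hykmin using hminex
    have hfval : ∀ (k : ℕ) y, f k y = (∑ i, ⟪g i, y i⟫) + (((k : ℝ) + 1) / 2) * ‖L y - d‖ ^ 2 :=
      fun k y => rfl
    have hLval : ∀ y : Fin N → EuclideanSpace ℝ (Fin n), L y = ∑ i, A i (y i) := fun y => rfl
    set μ : ℕ → EuclideanSpace ℝ (Fin l) := fun k => ((k : ℝ) + 1) • (L (yk k) - d) with hμdef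
    have hμval : ∀ k : ℕ, μ k = ((k : ℝ) + 1) • (L (yk k) - d) := fun k => rfl
    -- first-order optimality
    have hopt : ∀ k : ℕ, ∀ u ∈ piΩ,
        0 ≤ (∑ i, ⟪g i, u i - yk k i⟫) + ⟪μ k, L u - L (yk k)⟫ := by
      intro k u hu
      set a : ℝ := (∑ i, ⟪g i, u i - yk k i⟫) + ⟪μ k, L u - L (yk k)⟫ with hadef
      set b : ℝ := (((k : ℝ) + 1) / 2) * ‖L u - L (yk k)‖ ^ 2 with hbdef
      have hbnn : 0 ≤ b := by positivity
      have hstep : ∀ m : ℕ, 0 ≤ a + (1 / ((m : ℝ) + 1)) * b := by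
        intro m
        set t : ℝ := 1 / ((m : ℝ) + 1) with htdef
        have ht0 : 0 < t := by positivity
        have ht1 : t ≤ 1 := by
          rw [htdef, div_le_one (by positivity)]
          linarith [Nat.cast_nonneg (α := ℝ) m]
        set yt := yk k + t • (u - yk k) with hytdef
        have hytPi : yt ∈ piΩ := by
          have heq : yt = (1 - t) • yk k + t • u := by
            rw [hytdef]
            simp only [smul_sub, sub_smul, one_smul]
            abel
          rw [heq]
          exact hScvx (hykPi k) hu (by linarith) ht0.le (by ring)
        have hf : f k (yk k) ≤ f k yt := hykmin k hytPi
        have hexp1 : ∑ i, ⟪g i, yt i⟫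
            = ∑ i, ⟪g i, yk k i⟫ + t * ∑ i, ⟪g i, u i - yk k i⟫ := by
          rw [Finset.mul_sum, ← Finset.sum_add_distrib]
          refine Finset.sum_congr rfl fun i _ => ?_
          have : yt i = yk k i + t • (u i - yk k i) := by
            rw [hytdef]
            simp [Pi.add_apply, Pi.smul_apply, Pi.sub_apply]
          rw [this, inner_add_right, real_inner_smul_right]
        have hexp2 : L yt - d = (L (yk k) - d) + t • (L u - L (yk k)) := by
          rw [hytdef, hLadd, hLsmul, hLsub]
          abel
        have hexp3 : ‖L yt - d‖ ^ 2 = ‖L (yk k) - d‖ ^ 2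
            + 2 * t * ⟪L (yk k) - d, L u - L (yk k)⟫ + t ^ 2 * ‖L u - L (yk k)‖ ^ 2 := by
          rw [hexp2, norm_add_sq_real, real_inner_smul_right, norm_smul, Real.norm_eq_abs,
            mul_pow, sq_abs]
          ring
        have hμinner : ⟪μ k, L u - L (yk k)⟫
            = ((k : ℝ) + 1) * ⟪L (yk k) - d, L u - L (yk k)⟫ := by
          rw [hμval k]
          exact real_inner_smul_left _ _ _
        have hfy : f k yt = f k (yk k) + t * a + t ^ 2 * b := by
          rw [hfval k yt, hfval k (yk k)]
          rw [hexp1, hexp3, hadef, hμinner, hbdef]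
          ring
        have h0 : (0:ℝ) ≤ t * (a + t * b) := by
          rw [hfy] at hf
          nlinarith [hf]
        have := nonneg_of_mul_nonneg_right (by linarith [h0] : 0 ≤ t * (a + t * b)) ht0
        linarith [this]
      have htb : Filter.Tendsto (fun m : ℕ => a + (1 / ((m : ℝ) + 1)) * b)
          Filter.atTop (nhds a) := by
        have h1 : Filter.Tendsto (fun m : ℕ => (1 / ((m : ℝ) + 1)) * b)
            Filter.atTop (nhds (0 * b)) :=
          tendsto_one_div_add_atTop_nhds_zero_nat.mul_const b
        rw [zero_mul] at h1
        have := Filter.Tendsto.const_add a h1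
        rwa [add_zero] at this
      exact ge_of_tendsto' htb hstep
    -- penalty bound
    have hC0bd : ∀ k : ℕ, (((k : ℝ) + 1) / 2) * ‖L (yk k) - d‖ ^ 2 ≤ C0 := by
      intro k
      have hfle : f k (yk k) ≤ f k yhat := hykmin k hyhatPi
      have hLyhat : L yhat = d := hyhatC
      have hfyhat : f k yhat = ∑ i, ⟪g i, yhat i⟫ := by
        rw [hfval, hLyhat, sub_self, norm_zero]
        norm_num
      have hterm : ∀ i : Fin N, ⟪g i, yhat i⟫ - ⟪g i, yk k i⟫ ≤ 2 * R * ‖g i‖ := by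
        intro i
        have h1 := real_inner_le_norm (g i) (yhat i)
        have h2 := abs_real_inner_le_norm (g i) (yk k i)
        have h3 := hR yhat hyhatPi i
        have h4 := hR (yk k) (hykPi k) i
        have h5 := norm_nonneg (g i)
        have h6 := abs_le.mp h2
        nlinarith [h6.1, h6.2]
      have hsum : ∑ i, ⟪g i, yhat i⟫ - ∑ i, ⟪g i, yk k i⟫ ≤ C0 := by
        rw [← Finset.sum_sub_distrib]
        calc ∑ i, (⟪g i, yhat i⟫ - ⟪g i, yk k i⟫) ≤ ∑ i, 2 * R * ‖g i‖ :=
              Finset.sum_le_sum fun i _ => hterm i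
        _ = C0 := by rw [hC0def, hGdef, Finset.mul_sum]
      have hfk : f k (yk k) = ∑ i, ⟪g i, yk k i⟫
          + (((k : ℝ) + 1) / 2) * ‖L (yk k) - d‖ ^ 2 := hfval k (yk k)
      rw [hfk, hfyhat] at hfle
      linarith
    have hk1pos : ∀ k : ℕ, (0:ℝ) < (k : ℝ) + 1 := fun k => by positivity
    have hnormk : ∀ k : ℕ, ‖L (yk k) - d‖ ^ 2 ≤ 2 * C0 / ((k : ℝ) + 1) := by
      intro k
      rw [le_div_iff₀ (hk1pos k)]
      nlinarith [hC0bd k]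
    have hμd : ∀ k : ℕ, ⟪μ k, d - L (yk k)⟫ ≤ 0 := by
      intro k
      have heq : ⟪μ k, d - L (yk k)⟫ = -(((k : ℝ) + 1) * ‖L (yk k) - d‖ ^ 2) := by
        rw [hμval k]
        have h1 : d - L (yk k) = -(L (yk k) - d) := by abel
        rw [real_inner_smul_left, h1, inner_neg_right, real_inner_self_eq_norm_sq]
        ring
      rw [heq]
      have := sq_nonneg ‖L (yk k) - d‖
      nlinarith [hk1pos k]
    -- multiplier bound via Slater
    obtain ⟨c, hc, hcbd⟩ := adjoint_bound N n l A
    have hμker : ∀ k : ℕ, ∀ u : EuclideanSpace ℝ (Fin l),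
        (∀ i, LinearMap.adjoint (A i) u = 0) → ⟪u, μ k⟫ = 0 := by
      intro k u hu
      rw [hμval k, real_inner_smul_right]
      have hzero : ∀ y : Fin N → EuclideanSpace ℝ (Fin n), ⟪u, L y⟫ = 0 := by
        intro y
        rw [hLval, inner_sum]
        refine Finset.sum_eq_zero fun i _ => ?_
        rw [← LinearMap.adjoint_inner_left, hu i, inner_zero_left]
      have h1 : ⟪u, L (yk k) - d⟫ = 0 := by
        rw [inner_sub_right, hzero]
        have : d = L yhat := hyhatC.symm
        rw [this, hzero]
        ring
      rw [h1, mul_zero]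
    have hadjbd : ∀ k : ℕ, ρ * ∑ i, ‖LinearMap.adjoint (A i) (μ k)‖ ≤ C1 := by
      intro k
      set z : Fin N → EuclideanSpace ℝ (Fin n) := fun i =>
        if h : LinearMap.adjoint (A i) (μ k) = 0 then 0
        else (ρ / ‖LinearMap.adjoint (A i) (μ k)‖) • LinearMap.adjoint (A i) (μ k) with hzdef
      have hznorm : ∀ i, ‖z i‖ ≤ ρ := by
        intro i
        rw [hzdef]
        by_cases h : LinearMap.adjoint (A i) (μ k) = 0
        · simp [h, hρ.le]
        · simp only [h, dif_neg, not_false_iff]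
          rw [norm_smul, Real.norm_eq_abs,
            abs_of_pos (div_pos hρ (norm_pos_iff.mpr h)),
            div_mul_cancel₀ _ (norm_ne_zero_iff.mpr h)]
      have hzin : ∀ i, ⟪LinearMap.adjoint (A i) (μ k), z i⟫
          = ρ * ‖LinearMap.adjoint (A i) (μ k)‖ := by
        intro i
        rw [hzdef]
        by_cases h : LinearMap.adjoint (A i) (μ k) = 0
        · simp [h]
        · simp only [h, dif_neg, not_false_iff]
          rw [real_inner_smul_right, real_inner_self_eq_norm_sq]
          have hne := norm_ne_zero_iff.mpr h
          field_simp
      set u : Fin N → EuclideanSpace ℝ (Fin n) := yhat - z with hudef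
      have huPi : u ∈ piΩ := by
        apply hballρ
        intro i
        have : u i - yhat i = -(z i) := by
          rw [hudef]
          simp [Pi.sub_apply]
        rw [this, norm_neg]
        exact hznorm i
      have h1 := hopt k u huPi
      have hLyhat : L yhat = d := hyhatC
      have hLu : L u = d - L z := by rw [hudef, hLsub, hLyhat]
      have h2 : ⟪μ k, L u - L (yk k)⟫ = ⟪μ k, d - L (yk k)⟫ - ⟪μ k, L z⟫ := by
        rw [hLu, show d - L z - L (yk k) = (d - L (yk k)) - L z from by abel, inner_sub_right]
      have h3 : ⟪μ k, L z⟫ = ρ * ∑ i, ‖LinearMap.adjoint (A i) (μ k)‖ := by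
        have : ⟪μ k, L z⟫ = ∑ i, ⟪μ k, A i (z i)⟫ := by
          rw [hLval, inner_sum]
        rw [this, Finset.mul_sum]
        refine Finset.sum_congr rfl fun i _ => ?_
        rw [← LinearMap.adjoint_inner_left]
        exact hzin i
      have h4 : ∑ i, ⟪g i, u i - yk k i⟫ ≤ C1 := by
        have hterm : ∀ i : Fin N, ⟪g i, u i - yk k i⟫ ≤ ‖g i‖ * (2 * R + ρ) := by
          intro i
          have h5 := real_inner_le_norm (g i) (u i - yk k i)
          have h6 : ‖u i - yk k i‖ ≤ 2 * R + ρ := by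
            have hui : u i = yhat i - z i := by rw [hudef]; simp [Pi.sub_apply]
            rw [hui]
            calc ‖yhat i - z i - yk k i‖ ≤ ‖yhat i - z i‖ + ‖yk k i‖ := norm_sub_le _ _
            _ ≤ ‖yhat i‖ + ‖z i‖ + ‖yk k i‖ := by
                have := norm_sub_le (yhat i) (z i)
                linarith
            _ ≤ R + ρ + R := by
                have := hR yhat hyhatPi i
                have := hR (yk k) (hykPi k) i
                have := hznorm i
                linarith
            _ = 2 * R + ρ := by ring
          have h7 := norm_nonneg (g i)
          nlinarith
        calc ∑ i, ⟪g i, u i - yk k i⟫ ≤ ∑ i, ‖g i‖ * (2 * R + ρ) :=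
              Finset.sum_le_sum fun i _ => hterm i
        _ = C1 := by rw [hC1def, hGdef, Finset.sum_mul]
      rw [h2, h3] at h1
      have := hμd k
      linarith
    have hμbd : ∀ k : ℕ, ‖μ k‖ ≤ C1 / (ρ * c) := by
      intro k
      rw [le_div_iff₀ (by positivity)]
      have h1 := hcbd (μ k) (hμker k)
      have h2 := hadjbd k
      nlinarith [norm_nonneg (μ k)]
    -- extract a convergent subsequence
    set Q : Set ((Fin N → EuclideanSpace ℝ (Fin n)) × EuclideanSpace ℝ (Fin l)) :=
      piΩ ×ˢ Metric.closedBall 0 (C1 / (ρ * c)) with hQdef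
    have hQcpt : IsCompact Q := hScpt.prod (isCompact_closedBall 0 _)
    have hseq : ∀ k : ℕ, (yk k, μ k) ∈ Q := by
      intro k
      refine ⟨hykPi k, ?_⟩
      rw [Metric.mem_closedBall, dist_zero_right]
      exact hμbd k
    obtain ⟨⟨ybar, μbar⟩, hbarQ, φ, hφ, htend⟩ := hQcpt.tendsto_subseq hseq
    have hybarPi : ybar ∈ piΩ := hbarQ.1
    have hytend : Filter.Tendsto (fun j => yk (φ j)) Filter.atTop (nhds ybar) :=
      (continuous_fst.tendsto (ybar, μbar)).comp htend
    -- limit satisfies the constraint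
    have hLybar : L ybar = d := by
      have h1 : Filter.Tendsto (fun j => ‖L (yk (φ j)) - d‖ ^ 2) Filter.atTop
          (nhds (‖L ybar - d‖ ^ 2)) :=
        (((hLcont.sub continuous_const).norm.pow 2).tendsto ybar).comp hytend
      have hub : ∀ j : ℕ, ‖L (yk (φ j)) - d‖ ^ 2 ≤ 2 * C0 / ((j : ℝ) + 1) := by
        intro j
        refine le_trans (hnormk (φ j)) ?_
        have hj : ((j : ℝ) + 1) ≤ ((φ j : ℝ) + 1) := by
          have h : j ≤ φ j := hφ.le_apply
          have h' : (j : ℝ) ≤ (φ j : ℝ) := by exact_mod_cast h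
          linarith
        gcongr
      have h2 : Filter.Tendsto (fun j => ‖L (yk (φ j)) - d‖ ^ 2) Filter.atTop (nhds 0) := by
        have h3 := tendsto_one_div_add_atTop_nhds_zero_nat.const_mul (2 * C0)
        rw [mul_zero] at h3
        have h4 : Filter.Tendsto (fun j : ℕ => 2 * C0 / ((j : ℝ) + 1)) Filter.atTop (nhds 0) := by
          simpa [div_eq_mul_inv] using h3
        exact squeeze_zero (fun j => by positivity) hub h4
      have h4 := tendsto_nhds_unique h1 h2
      have h5 : ‖L ybar - d‖ = 0 := by
        have := sq_eq_zero_iff.mp h4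
        exact this
      rw [norm_eq_zero, sub_eq_zero] at h5
      exact h5
    have hμtend : Filter.Tendsto (fun j => μ (φ j)) Filter.atTop (nhds μbar) :=
      (continuous_snd.tendsto (ybar, μbar)).comp htend
    -- limit optimality
    have hoptbar : ∀ u ∈ piΩ,
        0 ≤ (∑ i, ⟪g i, u i - ybar i⟫) + ⟪μbar, L u - L ybar⟫ := by
      intro u hu
      set Φf : ((Fin N → EuclideanSpace ℝ (Fin n)) × EuclideanSpace ℝ (Fin l)) → ℝ :=
        fun p => (∑ i, ⟪g i, u i - p.1 i⟫) + ⟪p.2, L u - L p.1⟫ with hΦdef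
      have hΦcont : Continuous Φf := by
        apply Continuous.add
        · exact continuous_finset_sum _ fun i _ =>
            continuous_const.inner
              (continuous_const.sub ((continuous_apply i).comp continuous_fst))
        · exact continuous_snd.inner (continuous_const.sub (hLcont.comp continuous_fst))
      have h1 : Filter.Tendsto (fun j => Φf (yk (φ j), μ (φ j))) Filter.atTop
          (nhds (Φf (ybar, μbar))) := (hΦcont.tendsto _).comp htend
      exact ge_of_tendsto' h1 fun j => hopt (φ j) u hu
    have hybarK : ybar ∈ K := ⟨hybarPi, hLybar⟩
    have heq1 : 0 ≤ ∑ i, ⟪g i, ystar i - ybar i⟫ := by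
      have h1 := hoptbar ystar (hKsub hystarK)
      have hLs : L ystar = d := hystarK.2
      rw [hLs, hLybar, sub_self, inner_zero_right, add_zero] at h1
      exact h1
    have heq2 : 0 ≤ ∑ i, ⟪g i, ybar i - ystar i⟫ := hVI ybar hybarK
    have hanti : ∑ i, ⟪g i, ystar i - ybar i⟫ = 0 := by
      have hneg : ∑ i, ⟪g i, ybar i - ystar i⟫ = -∑ i, ⟪g i, ystar i - ybar i⟫ := by
        rw [← Finset.sum_neg_distrib]
        refine Finset.sum_congr rfl fun i _ => ?_
        rw [← inner_neg_right, neg_sub]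
      rw [hneg] at heq2
      linarith
    refine ⟨μbar, ?_⟩
    intro i ui hui
    set u : Fin N → EuclideanSpace ℝ (Fin n) := Function.update ystar i ui with hudef
    have huPi : u ∈ piΩ := by
      rw [hmemPi]
      intro i'
      by_cases h : i' = i
      · subst h; rw [hudef, Function.update_self]; exact hui
      · rw [hudef, Function.update_of_ne h]; exact (hmemPi ystar).mp hystarK.1 i'
    have h1 := hoptbar u huPi
    have hsum1 : ∑ i', ⟪g i', u i' - ybar i'⟫
        = (∑ i', ⟪g i', u i' - ystar i'⟫) + ∑ i', ⟪g i', ystar i' - ybar i'⟫ := by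
      rw [← Finset.sum_add_distrib]
      refine Finset.sum_congr rfl fun i' _ => ?_
      simp only [inner_sub_right]
      ring
    have hupdate : ∑ i', ⟪g i', u i' - ystar i'⟫ = ⟪g i, ui - ystar i⟫ := by
      rw [Finset.sum_eq_single i]
      · rw [hudef, Function.update_self]
      · intro i' _ h
        rw [hudef, Function.update_of_ne h, sub_self, inner_zero_right]
      · intro h; exact absurd (Finset.mem_univ i) h
    have hLu2 : L u - L ybar = A i ui - A i (ystar i) := by
      have hLs : L ystar = d := hystarK.2
      rw [hLybar, ← hLs]
      have hsub : L u - L ystar = ∑ i', (A i' (u i') - A i' (ystar i')) := by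
        rw [hLval u, hLval ystar, ← Finset.sum_sub_distrib]
      rw [hsub, Finset.sum_eq_single i]
      · rw [hudef, Function.update_self]
      · intro i' _ h
        rw [hudef, Function.update_of_ne h, sub_self]
      · intro h; exact absurd (Finset.mem_univ i) h
    have hinner2 : ⟪μbar, A i ui - A i (ystar i)⟫
        = ⟪LinearMap.adjoint (A i) μbar, ui - ystar i⟫ := by
      rw [LinearMap.adjoint_inner_left, map_sub]
    rw [hsum1, hupdate, hanti, add_zero, hLu2, hinner2] at h1
    rw [inner_add_left]
    linarith
  obtain ⟨μbar, hμbar⟩ := hmult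
  refine ⟨ystar, μbar, fun i => (hmemPi ystar).mp hystarK.1 i, hystarK.2, ?_, ?_, ?_, ?_⟩
  · -- fixed point property
    intro i
    refine hprojchar i (ystar i) _ ((hmemPi ystar).mp hystarK.1 i) ?_
    intro u hu
    have h0 : ystar i - F ystar i - LinearMap.adjoint (A i) μbar - ystar i
        = -(F ystar i + LinearMap.adjoint (A i) μbar) := by abel
    rw [h0, inner_neg_left]
    linarith [hμbar i u hu]
  · -- uniqueness of KKT points
    intro y' μ' hy'mem hy'C hy'fix
    have hy'K : y' ∈ K := ⟨(hmemPi y').mpr hy'mem, hy'C⟩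
    refine huniq y' hy'K ?_
    intro z hz
    have hcomp : ∀ i, 0 ≤ ⟪F y' i + LinearMap.adjoint (A i) μ', z i - y' i⟫ := by
      intro i
      have hzi : z i ∈ Ω i := (hmemPi z).mp hz.1 i
      have h1 := hPproj i (y' i - F y' i - LinearMap.adjoint (A i) μ') (z i) hzi
      rw [← hy'fix i] at h1
      have h0 : y' i - F y' i - LinearMap.adjoint (A i) μ' - y' i
          = -(F y' i + LinearMap.adjoint (A i) μ') := by abel
      rw [h0, inner_neg_left] at h1
      linarith
    have hsum : 0 ≤ ∑ i, ⟪F y' i + LinearMap.adjoint (A i) μ', z i - y' i⟫ :=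
      Finset.sum_nonneg fun i _ => hcomp i
    have hsplit : ∑ i, ⟪F y' i + LinearMap.adjoint (A i) μ', z i - y' i⟫
        = (∑ i, ⟪F y' i, z i - y' i⟫) + ∑ i, ⟪LinearMap.adjoint (A i) μ', z i - y' i⟫ := by
      rw [← Finset.sum_add_distrib]
      exact Finset.sum_congr rfl fun i _ => by rw [inner_add_left]
    have hzero : ∑ i, ⟪LinearMap.adjoint (A i) μ', z i - y' i⟫ = 0 := by
      have : ∀ i, ⟪LinearMap.adjoint (A i) μ', z i - y' i⟫ = ⟪μ', A i (z i) - A i (y' i)⟫ := by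
        intro i
        rw [LinearMap.adjoint_inner_left, map_sub]
      rw [Finset.sum_congr rfl fun i _ => this i, ← inner_sum]
      rw [Finset.sum_sub_distrib]
      have hzz : (∑ i, A i (z i)) - ∑ i, A i (y' i) = 0 := by
        have h1 : ∑ i, A i (z i) = d := hz.2
        have h2 : ∑ i, A i (y' i) = d := hy'C
        rw [h1, h2, sub_self]
      rw [hzz, inner_zero_right]
    rw [hsplit, hzero, add_zero] at hsum
    exact hsum
  · -- VI property
    intro y hymem hyC
    exact hVI y ⟨(hmemPi y).mpr hymem, hyC⟩
  · -- VI uniqueness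
    intro y' hy'mem hy'C hy'VI
    exact huniq y' ⟨(hmemPi y').mpr hy'mem, hy'C⟩ fun z hz => hy'VI z ((hmemPi z).mp hz.1) hz.2
end

section
/- Let each Ω_i ⊆ ℝ^n be nonempty, closed and convex, with metric projections P_{Ω_i}; let g_i : ℝ^n × ℝ^m → ℝ^n, φ_i : ℝ^n → ℝ^m, A_i ∈ ℝ^{l×n}, d_i ∈ ℝ^l, α > 0, and σ(y) = Σ_{i=1}^N φ_i(y_i). Let L ∈ ℝ^{N×N} have all row sums zero and all column sums zero, and suppose every v ∈ ℝ^N with Lv = 0 is a multiple of 1_N. Suppose x_i* ∈ ℝ^n, v_i* = 0, μ_i*, z_i* ∈ ℝ^l with Σ_i z_i* = 0, and η_i*, w_i* ∈ ℝ^m satisfy, with y_i* = P_{Ω_i}(x_i*): (i) 0 = −x_i* + y_i* − g_i(y_i*, η_i*) − A_iᵀμ_i* for all i; (ii) 0 = −α Σ_j L_{ij} μ_j* − z_i* + A_i y_i* − d_i for all i; (iii) Σ_j L_{ij} μ_j* = 0 for all i; (iv) 0 = −η_i* − Σ_j L_{ij} η_j* − Σ_j L_{ij} w_j* + N φ_i(y_i*)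 for all i; (v) Σ_j L_{ij} η_j* = 0 for all i. Then: η_i* = σ(y*) for all i; there exists μ* ∈ ℝ^l with μ_i* = μ* for all i; Σ_i A_i y_i* = Σ_i d_i; and y_i* = P_{Ω_i}(y_i* − g_i(y_i*, σ(y*)) − A_iᵀμ*) for all i. -/
open scoped RealInnerProductSpace

/-- Sufficiency part of Lemma 3: an equilibrium of the closed-loop system yields consensual
aggregator estimates equal to the true aggregator, a common Lagrange multiplier, satisfaction of
the coupled constraint, and the GNE fixed-point characterization. -/
theorem equilibrium_implies_gne_characterization (N n m l : ℕ)
    (Ω : Fin N → Set (EuclideanSpace ℝ (Fin n)))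
    (hΩne : ∀ i, (Ω i).Nonempty) (hΩcl : ∀ i, IsClosed (Ω i)) (hΩcvx : ∀ i, Convex ℝ (Ω i))
    (P : Fin N → EuclideanSpace ℝ (Fin n) → EuclideanSpace ℝ (Fin n))
    (hPmem : ∀ i x, P i x ∈ Ω i)
    (hPproj : ∀ i x, ∀ u ∈ Ω i, ⟪x - P i x, u - P i x⟫ ≤ 0)
    (g : Fin N → EuclideanSpace ℝ (Fin n) → EuclideanSpace ℝ (Fin m) → EuclideanSpace ℝ (Fin n))
    (φ : Fin N → EuclideanSpace ℝ (Fin n) → EuclideanSpace ℝ (Fin m))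
    (A : Fin N → EuclideanSpace ℝ (Fin n) →ₗ[ℝ] EuclideanSpace ℝ (Fin l))
    (d : Fin N → EuclideanSpace ℝ (Fin l))
    (α : ℝ) (hα : 0 < α)
    (L : Matrix (Fin N) (Fin N) ℝ)
    (hrow : ∀ i, ∑ j, L i j = 0)
    (hcol : ∀ j, ∑ i, L i j = 0)
    (hker : ∀ v : Fin N → ℝ, Matrix.mulVec L v = 0 → ∃ c : ℝ, v = fun _ => c)
    (x v : Fin N → EuclideanSpace ℝ (Fin n)) (hv : ∀ i, v i = 0)
    (μ z : Fin N → EuclideanSpace ℝ (Fin l)) (hz : ∑ i, z i = 0)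
    (η w : Fin N → EuclideanSpace ℝ (Fin m))
    (y : Fin N → EuclideanSpace ℝ (Fin n)) (hy : ∀ i, y i = P i (x i))
    (heq1 : ∀ i, (0 : EuclideanSpace ℝ (Fin n)) =
      -x i + y i - g i (y i) (η i) - LinearMap.adjoint (A i) (μ i))
    (heq2 : ∀ i, (0 : EuclideanSpace ℝ (Fin l)) =
      -(α • ∑ j, L i j • μ j) - z i + A i (y i) - d i)
    (heq3 : ∀ i, ∑ j, L i j • μ j = (0 : EuclideanSpace ℝ (Fin l)))
    (heq4 : ∀ i, (0 : EuclideanSpace ℝ (Fin m)) =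
      -η i - (∑ j, L i j • η j) - (∑ j, L i j • w j) + (N : ℝ) • φ i (y i))
    (heq5 : ∀ i, ∑ j, L i j • η j = (0 : EuclideanSpace ℝ (Fin m))) :
    (∀ i, η i = ∑ j, φ j (y j)) ∧
    (∃ μstar : EuclideanSpace ℝ (Fin l), (∀ i, μ i = μstar) ∧
      (∀ i, y i = P i (y i - g i (y i) (∑ j, φ j (y j)) - LinearMap.adjoint (A i) μstar))) ∧
    (∑ i, A i (y i) = ∑ i, d i) := by

  classical
  have hconst : ∀ (p : ℕ) (f : Fin N → EuclideanSpace ℝ (Fin p)),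
      (∀ i, ∑ j, L i j • f j = 0) → ∀ i i', f i = f i' := by
    intro p f hf i i'
    ext k
    have h : Matrix.mulVec L (fun j => f j k) = 0 := by
      funext i''
      have h2 := congrArg (EuclideanSpace.proj k) (hf i'')
      simpa [Matrix.mulVec, dotProduct, map_sum] using h2
    obtain ⟨c, hc⟩ := hker _ h
    have h1 : f i k = c := congrFun hc i
    have h2 : f i' k = c := congrFun hc i'
    rw [h1, h2]
  -- the coupled constraint holds (works for all N)
  have hconstraint : ∑ i, A i (y i) = ∑ i, d i := by
    have hs : ∑ i, (-(α • ∑ j, L i j • μ j) - z i + A i (y i) - d i)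
        = (0 : EuclideanSpace ℝ (Fin l)) := by
      rw [Finset.sum_congr rfl (fun i _ => (heq2 i).symm)]
      simp
    simp only [heq3, smul_zero, neg_zero, zero_sub, Finset.sum_sub_distrib,
      Finset.sum_add_distrib, Finset.sum_neg_distrib, hz, zero_add] at hs
    exact sub_eq_zero.mp hs
  rcases Nat.eq_zero_or_pos N with hN | hN
  · subst hN
    refine ⟨fun i => i.elim0, ⟨0, fun i => i.elim0, fun i => i.elim0⟩, hconstraint⟩
  · have i0 : Fin N := ⟨0, hN⟩
    have hNne : (N : ℝ) ≠ 0 := Nat.cast_ne_zero.mpr (hN).ne'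
    -- η is constant
    have hηc : ∀ i, η i = η i0 := fun i => hconst m η heq5 i i0
    -- sum of heq4 gives N • η i0 = N • σ
    have hs4 : ∑ i, (-η i - (∑ j, L i j • η j) - (∑ j, L i j • w j) + (N : ℝ) • φ i (y i))
        = (0 : EuclideanSpace ℝ (Fin m)) := by
      rw [Finset.sum_congr rfl (fun i _ => (heq4 i).symm)]
      simp
    have hw : ∑ i, ∑ j, L i j • w j = (0 : EuclideanSpace ℝ (Fin m)) := by
      rw [Finset.sum_comm]
      refine Finset.sum_eq_zero fun j _ => ?_
      rw [← Finset.sum_smul, hcol j, zero_smul]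
    have hηsum : ∑ i, η i = (N : ℝ) • η i0 := by
      rw [Finset.sum_congr rfl (fun i _ => hηc i), Finset.sum_const, Finset.card_univ,
        Fintype.card_fin, ← Nat.cast_smul_eq_nsmul ℝ]
    simp only [heq5, Finset.sum_sub_distrib, Finset.sum_add_distrib, Finset.sum_neg_distrib,
      Finset.sum_const_zero, sub_zero, ← Finset.smul_sum, hw, hηsum] at hs4
    have hη0 : η i0 = ∑ j, φ j (y j) := by
      have h5 : (N : ℝ) • η i0 = (N : ℝ) • ∑ j, φ j (y j) := by
        rw [neg_add_eq_sub] at hs4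
        exact (sub_eq_zero.mp hs4).symm
      exact smul_right_injective _ hNne h5
    have hηall : ∀ i, η i = ∑ j, φ j (y j) := fun i => (hηc i).trans hη0
    -- μ is constant
    have hμc : ∀ i, μ i = μ i0 := fun i => hconst l μ heq3 i i0
    refine ⟨hηall, ⟨μ i0, hμc, fun i => ?_⟩, hconstraint⟩
    have hx : x i = y i - g i (y i) (∑ j, φ j (y j)) - LinearMap.adjoint (A i) (μ i0) := by
      have h := (heq1 i).symm
      rw [hηall i, hμc i] at h
      rw [show -x i + y i - g i (y i) (∑ j, φ j (y j)) - LinearMap.adjoint (A i) (μ i0)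
          = (y i - g i (y i) (∑ j, φ j (y j)) - LinearMap.adjoint (A i) (μ i0)) - x i from by
        abel] at h
      exact (sub_eq_zero.mp h).symm
    conv_lhs => rw [hy i]
    rw [hx]
end

section
/- Let each Ω_i ⊆ ℝ^n be nonempty, closed and convex with metric projections P_{Ω_i}; let g_i : ℝ^n × ℝ^m → ℝ^n, φ_i : ℝ^n → ℝ^m, A_i ∈ ℝ^{l×n}, d_i ∈ ℝ^l, α > 0, and σ(y) = Σ_i φ_i(y_i). Let L ∈ ℝ^{N×N} satisfy 1_NᵀL = 0 and have kernel exactly the span of 1_N. Suppose y* with y_i* ∈ Ω_i and μ* ∈ ℝ^l satisfy y_i* = P_{Ω_i}(y_i* − g_i(y_i*, σ(y*)) − A_iᵀμ*) for all i and Σ_i A_i y_i* = Σ_i d_i. Then there exist x_i* ∈ ℝ^n, z_i* ∈ ℝ^l with Σ_i z_i* = 0, and η_i*, w_i* ∈ ℝ^m such that, with μ_i* := μ* and v_i* := 0, all of the following equilibrium equations hold: y_i* = P_{Ω_i}(x_i*); 0 = −x_i* + y_i* − g_i(y_i*, η_i*) − A_iᵀμ_i*; 0 = −α Σ_j L_{ij}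 μ_j* − z_i* + A_i y_i* − d_i; Σ_j L_{ij} μ_j* = 0; 0 = −η_i* − Σ_j L_{ij} η_j* − Σ_j L_{ij} w_j* + N φ_i(y_i*); and Σ_j L_{ij} η_j* = 0. -/
open scoped RealInnerProductSpace

lemma laplacian_surj (N : ℕ) (L : Matrix (Fin N) (Fin N) ℝ)
    (hcol : ∀ j, ∑ i, L i j = 0)
    (hker : ∀ v : Fin N → ℝ, Matrix.mulVec L v = 0 ↔ ∃ c : ℝ, v = fun _ => c)
    (b : Fin N → ℝ) (hb : ∑ i, b i = 0) : ∃ w, Matrix.mulVec L w = b := by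
  rcases Nat.eq_zero_or_pos N with h0 | hN
  · subst h0
    exact ⟨0, Subsingleton.elim _ _⟩
  set f := Matrix.mulVecLin L with hf
  have hkerf : LinearMap.ker f = Submodule.span ℝ {(fun _ => 1 : Fin N → ℝ)} := by
    ext v
    simp only [LinearMap.mem_ker, hf, Matrix.mulVecLin_apply, hker, Submodule.mem_span_singleton]
    constructor
    · rintro ⟨c, rfl⟩
      exact ⟨c, by funext i; simp⟩
    · rintro ⟨a, rfl⟩
      exact ⟨a, by funext i; simp⟩
  have hone : (fun _ => (1:ℝ) : Fin N → ℝ) ≠ 0 := fun h => one_ne_zero (congrFun h ⟨0, hN⟩)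
  have hkerdim : Module.finrank ℝ (LinearMap.ker f) = 1 := by
    rw [hkerf, finrank_span_singleton hone]
  let s : (Fin N → ℝ) →ₗ[ℝ] ℝ :=
    { toFun := fun v => ∑ i, v i
      map_add' := by intros; simp [Finset.sum_add_distrib]
      map_smul' := by intros; simp [Finset.mul_sum] }
  have hssurj : Function.Surjective s := by
    intro r
    exact ⟨Pi.single ⟨0, hN⟩ r, by simp [s, Finset.sum_pi_single']⟩
  have hle : LinearMap.range f ≤ LinearMap.ker s := by
    rintro _ ⟨w, rfl⟩
    simp only [LinearMap.mem_ker, s, LinearMap.coe_mk, AddHom.coe_mk, hf, Matrix.mulVecLin_apply,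
      Matrix.mulVec, dotProduct]
    rw [Finset.sum_comm]
    simp [← Finset.sum_mul, hcol]
  have hrn1 := LinearMap.finrank_range_add_finrank_ker f
  have hrn2 := LinearMap.finrank_range_add_finrank_ker s
  have hNfin : Module.finrank ℝ (Fin N → ℝ) = N := by simp
  have hsr : Module.finrank ℝ (LinearMap.range s) = 1 := by
    rw [LinearMap.range_eq_top.mpr hssurj]; simp
  have heq : LinearMap.range f = LinearMap.ker s :=
    Submodule.eq_of_le_of_finrank_eq hle (by omega)
  have : b ∈ LinearMap.range f := by
    rw [heq]; simpa [s] using hb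
  obtain ⟨w, hw⟩ := this
  exact ⟨w, hw⟩

/-- Necessity part of Lemma 3: if `y*` satisfies the GNE fixed-point characterization with a
common Lagrange multiplier `μ*` and the coupled constraint, then there exists an equilibrium
`(x*, v* = 0, μ_i* = μ*, z*, η*, w*)` of the closed-loop system. -/
theorem gne_characterization_implies_equilibrium (N n m l : ℕ)
    (Ω : Fin N → Set (EuclideanSpace ℝ (Fin n)))
    (hΩne : ∀ i, (Ω i).Nonempty) (hΩcl : ∀ i, IsClosed (Ω i)) (hΩcvx : ∀ i, Convex ℝ (Ω i))
    (P : Fin N → EuclideanSpace ℝ (Fin n) → EuclideanSpace ℝ (Fin n))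
    (hPmem : ∀ i x, P i x ∈ Ω i)
    (hPproj : ∀ i x, ∀ u ∈ Ω i, ⟪x - P i x, u - P i x⟫ ≤ 0)
    (g : Fin N → EuclideanSpace ℝ (Fin n) → EuclideanSpace ℝ (Fin m) → EuclideanSpace ℝ (Fin n))
    (φ : Fin N → EuclideanSpace ℝ (Fin n) → EuclideanSpace ℝ (Fin m))
    (A : Fin N → EuclideanSpace ℝ (Fin n) →ₗ[ℝ] EuclideanSpace ℝ (Fin l))
    (d : Fin N → EuclideanSpace ℝ (Fin l))
    (α : ℝ) (hα : 0 < α)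
    (L : Matrix (Fin N) (Fin N) ℝ)
    (hcol : ∀ j, ∑ i, L i j = 0)
    (hker : ∀ v : Fin N → ℝ, Matrix.mulVec L v = 0 ↔ ∃ c : ℝ, v = fun _ => c)
    (y : Fin N → EuclideanSpace ℝ (Fin n))
    (μstar : EuclideanSpace ℝ (Fin l))
    (hymem : ∀ i, y i ∈ Ω i)
    (hfix : ∀ i, y i = P i (y i - g i (y i) (∑ j, φ j (y j)) - LinearMap.adjoint (A i) μstar))
    (hcon : ∑ i, A i (y i) = ∑ i, d i) :
    ∃ (x : Fin N → EuclideanSpace ℝ (Fin n)) (z : Fin N → EuclideanSpace ℝ (Fin l))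
      (η w : Fin N → EuclideanSpace ℝ (Fin m)),
      (∑ i, z i = 0) ∧
      (∀ i, y i = P i (x i)) ∧
      (∀ i, (0 : EuclideanSpace ℝ (Fin n)) =
        -x i + y i - g i (y i) (η i) - LinearMap.adjoint (A i) μstar) ∧
      (∀ i, (0 : EuclideanSpace ℝ (Fin l)) =
        -(α • ∑ j, L i j • μstar) - z i + A i (y i) - d i) ∧
      (∀ i, ∑ j, L i j • μstar = (0 : EuclideanSpace ℝ (Fin l))) ∧
      (∀ i, (0 : EuclideanSpace ℝ (Fin m)) =
        -η i - (∑ j, L i j • η j) - (∑ j, L i j • w j) + (N : ℝ) • φ i (y i)) ∧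
      (∀ i, ∑ j, L i j • η j = (0 : EuclideanSpace ℝ (Fin m))) := by
  set σ : EuclideanSpace ℝ (Fin m) := ∑ j, φ j (y j) with hσ
  have hrow : ∀ i, ∑ j, L i j = 0 := by
    intro i
    have h1 : Matrix.mulVec L (fun _ => (1:ℝ)) = 0 := (hker _).mpr ⟨1, rfl⟩
    have := congrFun h1 i
    simpa [Matrix.mulVec, dotProduct] using this
  -- solve for w coordinatewise
  have hsolve : ∀ k : Fin m, ∃ wk : Fin N → ℝ,
      Matrix.mulVec L wk = fun i => (N : ℝ) * φ i (y i) k - σ k := by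
    intro k
    apply laplacian_surj N L hcol hker
    have hσk : σ k = ∑ i, φ i (y i) k := by
      rw [hσ]
      rw [WithLp.ofLp_sum]
      exact Finset.sum_apply k Finset.univ _
    rw [Finset.sum_sub_distrib]
    simp [hσk, Finset.mul_sum, Finset.sum_const, Finset.card_univ]
  choose W hW using hsolve
  refine ⟨fun i => y i - g i (y i) σ - LinearMap.adjoint (A i) μstar,
    fun i => A i (y i) - d i, fun _ => σ,
    fun i => (EuclideanSpace.equiv (Fin m) ℝ).symm (fun k => W k i), ?_, ?_, ?_, ?_, ?_, ?_, ?_⟩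
  · rw [Finset.sum_sub_distrib, hcon, sub_self]
  · exact hfix
  · intro i; show (0 : EuclideanSpace ℝ (Fin n)) = -(y i - g i (y i) σ - LinearMap.adjoint (A i) μstar) + y i - g i (y i) σ - LinearMap.adjoint (A i) μstar; abel
  · intro i
    have h0 : ∑ j, L i j • μstar = 0 := by rw [← Finset.sum_smul, hrow, zero_smul]
    rw [h0]; simp
  · intro i; rw [← Finset.sum_smul, hrow, zero_smul]
  · intro i
    have hη : ∑ j, L i j • (fun _ => σ : Fin N → EuclideanSpace ℝ (Fin m)) j = 0 := by
      rw [← Finset.sum_smul, hrow, zero_smul]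
    have hw : (∑ j, L i j • (EuclideanSpace.equiv (Fin m) ℝ).symm (fun k => W k j))
        = (N : ℝ) • φ i (y i) - σ := by
      ext k
      have h1 : (∑ j, L i j • (EuclideanSpace.equiv (Fin m) ℝ).symm (fun k => W k j)) k
          = ∑ j, L i j * W k j := by
        rw [WithLp.ofLp_sum, Finset.sum_apply k Finset.univ _]
        rfl
      have h2 := congrFun (hW k) i
      simp only [Matrix.mulVec, dotProduct] at h2
      rw [h1, h2]
      simp [PiLp.sub_apply, PiLp.smul_apply, smul_eq_mul]
    rw [hη, hw]
    abel
  · intro i; rw [← Finset.sum_smul, hrow, zero_smul]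
end
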